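/- Let M ≥ 6 be even, let u = 0 < v < w < M with v and w even, and suppose b_u ⊕ b_v ⊕ b_w = 0. Define the intervals L = {1, ..., v−1}, R = {v+1, ..., w−1}, B = {w+1, ..., M−1}. Then for every z ∈ F_2^M with Γ(z) ≠ 0 one has i^{b_u + b_v + b_w} · (−1)^{E(z)} = 1, where E(z) = z_u + z_v + z_w + Σ_{j even, j ∉ {u,v,w}} z_j + b_u · Σ_{j ∈ R, j odd} z_j + b_v · Σ_{j ∈ B, j odd} z_j + b_w · Σ_{j ∈ L, j odd} z_j, with the exponent of −1 evaluated modulo 2 and the exponent of i being the integer b_u + b_v + b_w. -/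

import Mathlib

open Finset

/-- The quadratic form on F_2^M associated with the cycle on vertices
{0, ..., M−1} with bits b_u, b_v, b_w at the distinguished vertices
u = 0, v, w: q(x) = 2·Σ_j x_j x_{j+1} + b_u x_u + b_v x_v + b_w x_w in Z_4. -/
def cycleForm (M : ℕ) [NeZero M] (v w : Fin M) (bu bv bw : ZMod 2)
    (x : Fin M → ZMod 2) : ZMod 4 :=
  2 * ∑ j : Fin M, ((x j).val : ZMod 4) * ((x (j + 1)).val : ZMod 4)
    + (bu.val : ZMod 4) * ((x 0).val : ZMod 4)
    + (bv.val : ZMod 4) * ((x v).val : ZMod 4)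
    + (bw.val : ZMod 4) * ((x w).val : ZMod 4)

/-- The Fourier coefficient Γ(z) = Σ_x (−1)^{z^T x} i^{q(x)}. -/
noncomputable def cycleGamma (M : ℕ) [NeZero M] (v w : Fin M)
    (bu bv bw : ZMod 2) (z : Fin M → ZMod 2) : ℂ :=
  ∑ x : Fin M → ZMod 2,
    (-1 : ℂ) ^ (∑ α : Fin M, z α * x α).val *
      Complex.I ^ (cycleForm M v w bu bv bw x).val

/-- The exponent E(z) ∈ F_2: E(z) = z_u + z_v + z_w + Σ_{j even, j∉{u,v,w}} z_j
+ b_u·Σ_{j∈R, j odd} z_j + b_v·Σ_{j∈B, j odd} z_j + b_w·Σ_{j∈L, j odd} z_j,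
where L = {1,...,v−1}, R = {v+1,...,w−1}, B = {w+1,...,M−1} and u = 0. -/
def Eexp (M : ℕ) [NeZero M] (v w : Fin M) (bu bv bw : ZMod 2)
    (z : Fin M → ZMod 2) : ZMod 2 :=
  z 0 + z v + z w
    + ∑ j ∈ Finset.univ.filter
        (fun j : Fin M => Even j.val ∧ j ≠ 0 ∧ j ≠ v ∧ j ≠ w), z j
    + bu * ∑ j ∈ Finset.univ.filter
        (fun j : Fin M => v.val < j.val ∧ j.val < w.val ∧ Odd j.val), z j
    + bv * ∑ j ∈ Finset.univ.filter
        (fun j : Fin M => w.val < j.val ∧ Odd j.val), z j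
    + bw * ∑ j ∈ Finset.univ.filter
        (fun j : Fin M => 0 < j.val ∧ j.val < v.val ∧ Odd j.val), z j

/-! ### Auxiliary machinery -/

/-- Lift of a bit to `ZMod 4`. -/
def io2 (a : ZMod 2) : ZMod 4 := (a.val : ZMod 4)

lemma prod_expand (a c b d : ZMod 2) :
    2 * (io2 (a+c) * io2 (b+d)) = 2*(io2 a * io2 b) + 2*(io2 c * io2 d)
      + (2*(io2 a * io2 d) + 2*(io2 c * io2 b)) := by revert a c b d; decide

lemma lin_expand (b a c : ZMod 2) :
    io2 b * io2 (a + c) = io2 b * io2 a + io2 b * io2 c + 2 * (io2 b * io2 a * io2 c) := by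
  revert a b c; decide

lemma key5 (x r s b0 b1 b2 cj : ZMod 2) (h : r + s + b0*cj + b1*cj + b2*cj = 0) :
    2*(io2 x * io2 s) + 2*(io2 r * io2 x) + 2*(io2 b0 * io2 x * io2 cj)
      + 2*(io2 b1 * io2 x * io2 cj) + 2*(io2 b2 * io2 x * io2 cj) = 0 := by
  revert x r s b0 b1 b2 cj; decide

lemma two_io2_mul (a b : ZMod 2) : 2 * (io2 a * io2 b) = 2 * io2 (a * b) := by
  revert a b; decide

lemma two_io2_add (a b : ZMod 2) : 2 * io2 (a + b) = 2 * io2 a + 2 * io2 b := by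
  revert a b; decide

lemma ite_io2 (P : Prop) [Decidable P] (b x c : ZMod 2) :
    (if P then 2*(io2 b * io2 x * io2 c) else 0) = 2*(io2 (if P then b else 0) * io2 x * io2 c) := by
  split <;> simp [io2]

lemma zm2_a (bu bv bw : ZMod 2) (hb : bu + bv + bw = 0) :
    bv + bw + bu * 1 + 0 * 1 + 0 * 1 = 0 := by revert bu bv bw; decide
lemma zm2_b (bu bv bw : ZMod 2) (hb : bu + bv + bw = 0) :
    bw + bu + 0 * 1 + bv * 1 + 0 * 1 = 0 := by revert bu bv bw; decide
lemma zm2_c (bu bv bw : ZMod 2) (hb : bu + bv + bw = 0) :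
    bu + bv + 0 * 1 + 0 * 1 + bw * 1 = 0 := by revert bu bv bw; decide
lemma zm2_d (a : ZMod 2) : a + a + 0 * 1 + 0 * 1 + 0 * 1 = 0 := by revert a; decide
lemma zm2_e (c : ZMod 2) : 1 + 1 + 0 * c + 0 * c + 0 * c = 0 := by revert c; decide

/-- The additive hom a ↦ 2·ι(a) from ZMod 2 to ZMod 4. -/
def gmap : ZMod 2 →+ ZMod 4 :=
  { toFun := fun a => 2 * io2 a,
    map_zero' := by decide,
    map_add' := by decide }

@[simp] lemma gmap_apply (a : ZMod 2) : gmap a = 2 * io2 a := rfl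

lemma neg_one_pow_val_add (a b : ZMod 2) :
    (-1:ℂ)^(a+b).val = (-1:ℂ)^a.val * (-1:ℂ)^b.val := by
  rw [ZMod.val_add, ← pow_add]; exact (neg_one_pow_eq_pow_mod_two _).symm

lemma I_pow_val_add (a b : ZMod 4) :
    Complex.I^(a+b).val = Complex.I^a.val * Complex.I^b.val := by
  have h4 : ∀ m, Complex.I ^ (m % 4) = Complex.I ^ m := fun m => by
    conv_rhs => rw [← Nat.div_add_mod m 4]
    rw [pow_add, pow_mul, Complex.I_pow_four, one_pow, one_mul]
  rw [ZMod.val_add, ← pow_add, h4]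

/-- The radical vector c: 1 on even positions, and on odd positions the bit of the
"opposite" distinguished vertex. -/
def cvec (M : ℕ) [NeZero M] (v w : Fin M) (bu bv bw : ZMod 2) (j : Fin M) : ZMod 2 :=
  if Even j.val then 1 else if j.val < v.val then bw else if j.val < w.val then bu else bv

section
variable (M : ℕ) [NeZero M] (hM6 : 6 ≤ M) (hMeven : Even M) (v w : Fin M)
  (hv0 : 0 < v.val) (hvw : v.val < w.val) (hve : Even v.val) (hwe : Even w.val)
  (bu bv bw : ZMod 2) (hb : bu + bv + bw = 0)

lemma cvec_eval_even (i : Fin M) (h : i.val % 2 = 0) : cvec M v w bu bv bw i = 1 := by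
  unfold cvec; rw [if_pos (Nat.even_iff.mpr h)]

lemma cvec_eval_L (i : Fin M) (h : i.val % 2 = 1) (h2 : i.val < v.val) :
    cvec M v w bu bv bw i = bw := by
  unfold cvec; rw [if_neg (by rw [Nat.even_iff]; omega), if_pos h2]

lemma cvec_eval_R (i : Fin M) (h : i.val % 2 = 1) (h2 : ¬ i.val < v.val) (h3 : i.val < w.val) :
    cvec M v w bu bv bw i = bu := by
  unfold cvec; rw [if_neg (by rw [Nat.even_iff]; omega), if_neg h2, if_pos h3]

lemma cvec_eval_B (i : Fin M) (h : i.val % 2 = 1) (h2 : ¬ i.val < w.val) (hvw : v.val < w.val) :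
    cvec M v w bu bv bw i = bv := by
  unfold cvec; rw [if_neg (by rw [Nat.even_iff]; omega), if_neg (by omega), if_neg h2]

include hM6 hMeven hv0 hvw hve hwe hb in
lemma cvec_radical (j : Fin M) :
    cvec M v w bu bv bw (j-1) + cvec M v w bu bv bw (j+1)
      + (if j = 0 then bu else 0) * cvec M v w bu bv bw j
      + (if j = v then bv else 0) * cvec M v w bu bv bw j
      + (if j = w then bw else 0) * cvec M v w bu bv bw j = 0 := by
  have h1v : (1 : Fin M).val = 1 := by rw [Fin.val_one']; exact Nat.mod_eq_of_lt (by omega)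
  have hjM : j.val < M := j.isLt
  have hvM : v.val < M := v.isLt
  have hwM : w.val < M := w.isLt
  rw [Nat.even_iff] at hve hwe hMeven
  have hsub : (j - 1).val = if j.val = 0 then M - 1 else j.val - 1 := by
    rw [Fin.sub_def]; simp only [h1v]
    split <;> rename_i h
    · rw [h]; simp [Nat.mod_eq_of_lt (show M - 1 < M by omega)]
    · show (M - 1 + j.val) % M = j.val - 1
      rw [show M - 1 + j.val = M + (j.val - 1) by omega, Nat.add_mod_left,
        Nat.mod_eq_of_lt (by omega)]
  have hadd : (j + 1).val = if j.val = M - 1 then 0 else j.val + 1 := by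
    rw [Fin.val_add, h1v]; split <;> rename_i h
    · rw [h, show M - 1 + 1 = M by omega, Nat.mod_self]
    · exact Nat.mod_eq_of_lt (by omega)
  have hj0 : (j = 0) ↔ (j.val = 0) := by rw [Fin.ext_iff, Fin.val_zero]
  have hjv : (j = v) ↔ (j.val = v.val) := Fin.ext_iff
  have hjw : (j = w) ↔ (j.val = w.val) := Fin.ext_iff
  by_cases hpar : j.val % 2 = 1
  · rw [cvec_eval_even M v w bu bv bw _ (by rw [hsub]; split <;> omega),
        cvec_eval_even M v w bu bv bw _ (by rw [hadd]; split <;> omega),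
        if_neg (by rw [hj0]; omega), if_neg (by rw [hjv]; omega), if_neg (by rw [hjw]; omega)]
    exact zm2_e _
  · have hpar' : j.val % 2 = 0 := by omega
    have hcj : cvec M v w bu bv bw j = 1 := cvec_eval_even M v w bu bv bw j hpar'
    rw [hcj]
    by_cases h0 : j.val = 0
    · rw [cvec_eval_B M v w bu bv bw _ (by rw [hsub, if_pos h0]; omega)
            (by rw [hsub, if_pos h0]; omega) hvw,
          cvec_eval_L M v w bu bv bw _ (by rw [hadd, if_neg (by omega)]; omega)
            (by rw [hadd, if_neg (by omega)]; omega),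
          if_pos (hj0.mpr h0), if_neg (by rw [hjv]; omega), if_neg (by rw [hjw]; omega)]
      exact zm2_a bu bv bw hb
    · by_cases hv' : j.val = v.val
      · rw [cvec_eval_L M v w bu bv bw _ (by rw [hsub, if_neg h0]; omega)
              (by rw [hsub, if_neg h0]; omega),
            cvec_eval_R M v w bu bv bw _ (by rw [hadd, if_neg (by omega)]; omega)
              (by rw [hadd, if_neg (by omega)]; omega) (by rw [hadd, if_neg (by omega)]; omega),
            if_neg (by rw [hj0]; omega), if_pos (hjv.mpr hv'), if_neg (by rw [hjw]; omega)]
        exact zm2_b bu bv bw hb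
      · by_cases hw' : j.val = w.val
        · rw [cvec_eval_R M v w bu bv bw _ (by rw [hsub, if_neg h0]; omega)
                (by rw [hsub, if_neg h0]; omega) (by rw [hsub, if_neg h0]; omega),
              cvec_eval_B M v w bu bv bw _ (by rw [hadd, if_neg (by omega)]; omega)
                (by rw [hadd, if_neg (by omega)]; omega) hvw,
              if_neg (by rw [hj0]; omega), if_neg (by rw [hjv]; omega), if_pos (hjw.mpr hw')]
          exact zm2_c bu bv bw hb
        · rw [if_neg (by rw [hj0]; omega), if_neg (by rw [hjv]; omega),
              if_neg (by rw [hjw]; omega)]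
          by_cases hL : j.val < v.val
          · rw [cvec_eval_L M v w bu bv bw _ (by rw [hsub, if_neg h0]; omega)
                  (by rw [hsub, if_neg h0]; omega),
                cvec_eval_L M v w bu bv bw _ (by rw [hadd, if_neg (by omega)]; omega)
                  (by rw [hadd, if_neg (by omega)]; omega)]
            exact zm2_d bw
          · by_cases hR : j.val < w.val
            · rw [cvec_eval_R M v w bu bv bw _ (by rw [hsub, if_neg h0]; omega)
                    (by rw [hsub, if_neg h0]; omega) (by rw [hsub, if_neg h0]; omega),
                  cvec_eval_R M v w bu bv bw _ (by rw [hadd, if_neg (by omega)]; omega)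
                    (by rw [hadd, if_neg (by omega)]; omega)
                    (by rw [hadd, if_neg (by omega)]; omega)]
              exact zm2_d bu
            · rw [cvec_eval_B M v w bu bv bw _ (by rw [hsub, if_neg h0]; omega)
                    (by rw [hsub, if_neg h0]; omega) hvw,
                  cvec_eval_B M v w bu bv bw _ (by rw [hadd, if_neg (by omega)]; omega)
                    (by rw [hadd, if_neg (by omega)]; omega) hvw]
              exact zm2_d bv

lemma cycleForm_eq (x : Fin M → ZMod 2) : cycleForm M v w bu bv bw x =
    2 * ∑ j : Fin M, io2 (x j) * io2 (x (j+1))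
      + io2 bu * io2 (x 0) + io2 bv * io2 (x v) + io2 bw * io2 (x w) := rfl

lemma cycleForm_add_of_radical (c : Fin M → ZMod 2)
    (hrad : ∀ j : Fin M, c (j-1) + c (j+1) + (if j = 0 then bu else 0) * c j
      + (if j = v then bv else 0) * c j + (if j = w then bw else 0) * c j = 0)
    (x : Fin M → ZMod 2) :
    cycleForm M v w bu bv bw (x + c) = cycleForm M v w bu bv bw x + cycleForm M v w bu bv bw c := by
  rw [cycleForm_eq, cycleForm_eq, cycleForm_eq]
  simp only [Pi.add_apply]
  have hsum : 2 * ∑ j : Fin M, io2 (x j + c j) * io2 (x (j+1) + c (j+1))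
      = 2 * ∑ j : Fin M, io2 (x j) * io2 (x (j+1))
        + 2 * ∑ j : Fin M, io2 (c j) * io2 (c (j+1))
        + ∑ j : Fin M, (2*(io2 (x j) * io2 (c (j+1))) + 2*(io2 (c j) * io2 (x (j+1)))) := by
    rw [Finset.mul_sum, Finset.mul_sum, Finset.mul_sum, ← Finset.sum_add_distrib,
      ← Finset.sum_add_distrib]
    exact Finset.sum_congr rfl fun j _ => prod_expand _ _ _ _
  have hre : ∑ j : Fin M, 2*(io2 (c j) * io2 (x (j+1)))
      = ∑ j : Fin M, 2*(io2 (c (j-1)) * io2 (x j)) := by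
    apply Fintype.sum_equiv (Equiv.addRight (1 : Fin M))
    intro j
    simp
  have hcross : ∑ j : Fin M, (2*(io2 (x j) * io2 (c (j+1))) + 2*(io2 (c j) * io2 (x (j+1))))
      + 2 * (io2 bu * io2 (x 0) * io2 (c 0)) + 2 * (io2 bv * io2 (x v) * io2 (c v))
      + 2 * (io2 bw * io2 (x w) * io2 (c w)) = 0 := by
    rw [Finset.sum_add_distrib, hre,
      show 2 * (io2 bu * io2 (x 0) * io2 (c 0))
        = ∑ j : Fin M, if j = 0 then 2*(io2 bu * io2 (x j) * io2 (c j)) else 0 by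
          rw [Finset.sum_ite_eq' univ (0 : Fin M)]; simp,
      show 2 * (io2 bv * io2 (x v) * io2 (c v))
        = ∑ j : Fin M, if j = v then 2*(io2 bv * io2 (x j) * io2 (c j)) else 0 by
          rw [Finset.sum_ite_eq' univ v]; simp,
      show 2 * (io2 bw * io2 (x w) * io2 (c w))
        = ∑ j : Fin M, if j = w then 2*(io2 bw * io2 (x j) * io2 (c j)) else 0 by
          rw [Finset.sum_ite_eq' univ w]; simp,
      ← Finset.sum_add_distrib, ← Finset.sum_add_distrib, ← Finset.sum_add_distrib,
      ← Finset.sum_add_distrib]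
    apply Finset.sum_eq_zero
    intro j _
    rw [ite_io2, ite_io2, ite_io2]
    exact key5 _ _ _ _ _ _ _ (hrad j)
  rw [hsum, lin_expand, lin_expand, lin_expand]
  linear_combination hcross

include hM6 hMeven hvw in
/-- The sum Σ_j c_j c_{j+1} vanishes over F_2. -/
lemma cvec_adj_sum : ∑ j : Fin M, cvec M v w bu bv bw j * cvec M v w bu bv bw (j+1) = 0 := by
  classical
  have h1v : (1 : Fin M).val = 1 := by rw [Fin.val_one']; exact Nat.mod_eq_of_lt (by omega)
  rw [Nat.even_iff] at hMeven
  have hadd : ∀ j : Fin M, (j + 1).val = if j.val = M - 1 then 0 else j.val + 1 := by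
    intro j
    rw [Fin.val_add, h1v]; split <;> rename_i h
    · rw [h, show M - 1 + 1 = M by omega, Nat.mod_self]
    · exact Nat.mod_eq_of_lt (by omega)
  set c := cvec M v w bu bv bw with hc
  rw [← Finset.sum_filter_add_sum_filter_not univ (fun j : Fin M => Even j.val)
    (fun j => c j * c (j+1))]
  have h1 : ∑ j ∈ univ.filter (fun j : Fin M => Even j.val), c j * c (j+1)
      = ∑ j ∈ univ.filter (fun j : Fin M => ¬ Even j.val), c j := by
    apply Finset.sum_nbij' (fun j => j + 1) (fun j => j - 1)
    · intro a ha
      simp only [mem_filter, mem_univ, true_and] at ha ⊢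
      rw [hadd a, if_neg (by rw [Nat.even_iff] at ha; omega), Nat.even_iff] at *
      omega
    · intro a ha
      simp only [mem_filter, mem_univ, true_and] at ha ⊢
      have hs : (a - 1).val = if a.val = 0 then M - 1 else a.val - 1 := by
        rw [Fin.sub_def]; simp only [h1v]
        split <;> rename_i h
        · rw [h]; simp [Nat.mod_eq_of_lt (show M - 1 < M by omega)]
        · show (M - 1 + a.val) % M = a.val - 1
          rw [show M - 1 + a.val = M + (a.val - 1) by omega, Nat.add_mod_left,
            Nat.mod_eq_of_lt (by omega)]
      rw [Nat.even_iff] at ha ⊢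
      rw [hs]
      split <;> omega
    · intro a _; exact add_sub_cancel_right a 1
    · intro a _; exact sub_add_cancel a 1
    · intro a ha
      simp only [mem_filter, mem_univ, true_and] at ha
      rw [hc, cvec_eval_even M v w bu bv bw a (Nat.even_iff.mp ha), one_mul]
  have h2 : ∑ j ∈ univ.filter (fun j : Fin M => ¬ Even j.val), c j * c (j+1)
      = ∑ j ∈ univ.filter (fun j : Fin M => ¬ Even j.val), c j := by
    apply Finset.sum_congr rfl
    intro j hj
    simp only [mem_filter, mem_univ, true_and, Nat.even_iff] at hj
    rw [hc, cvec_eval_even M v w bu bv bw (j+1) (by rw [hadd j]; split <;> omega), mul_one]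
  rw [h1, h2, CharTwo.add_self_eq_zero]

include hM6 hMeven hvw hve hwe in
lemma cycleForm_cvec : cycleForm M v w bu bv bw (cvec M v w bu bv bw)
    = io2 bu + io2 bv + io2 bw := by
  rw [cycleForm_eq]
  have hz : 2 * ∑ j : Fin M, io2 (cvec M v w bu bv bw j) * io2 (cvec M v w bu bv bw (j+1)) = 0 := by
    rw [Finset.mul_sum]
    calc ∑ j : Fin M, 2 * (io2 (cvec M v w bu bv bw j) * io2 (cvec M v w bu bv bw (j+1)))
        = ∑ j : Fin M, gmap (cvec M v w bu bv bw j * cvec M v w bu bv bw (j+1)) :=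
          Finset.sum_congr rfl fun j _ => (two_io2_mul _ _).trans (gmap_apply _).symm
      _ = gmap (∑ j : Fin M, cvec M v w bu bv bw j * cvec M v w bu bv bw (j+1)) :=
          (map_sum gmap _ _).symm
      _ = gmap 0 := by rw [cvec_adj_sum M hM6 hMeven v w hvw bu bv bw]
      _ = 0 := map_zero gmap
  have h0 : cvec M v w bu bv bw 0 = 1 :=
    cvec_eval_even M v w bu bv bw 0 (by rw [Fin.val_zero])
  have hvv : cvec M v w bu bv bw v = 1 :=
    cvec_eval_even M v w bu bv bw v (Nat.even_iff.mp hve)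
  have hww : cvec M v w bu bv bw w = 1 :=
    cvec_eval_even M v w bu bv bw w (Nat.even_iff.mp hwe)
  rw [hz, h0, hvv, hww, show (io2 1 : ZMod 4) = 1 from rfl]
  ring

include hv0 hvw hve hwe in
lemma inner_cvec (z : Fin M → ZMod 2) :
    ∑ α : Fin M, z α * cvec M v w bu bv bw α = Eexp M v w bu bv bw z := by
  classical
  rw [Nat.even_iff] at hve hwe
  rw [Eexp]
  rw [← Finset.sum_filter_add_sum_filter_not univ (fun j : Fin M => Even j.val)
    (fun j => z j * cvec M v w bu bv bw j)]
  have hA : ∑ j ∈ univ.filter (fun j : Fin M => Even j.val), z j * cvec M v w bu bv bw j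
      = z 0 + z v + z w + ∑ j ∈ univ.filter
          (fun j : Fin M => Even j.val ∧ j ≠ 0 ∧ j ≠ v ∧ j ≠ w), z j := by
    have h1 : ∀ j ∈ univ.filter (fun j : Fin M => Even j.val),
        z j * cvec M v w bu bv bw j = z j := by
      intro j hj
      simp only [mem_filter, mem_univ, true_and] at hj
      rw [cvec_eval_even M v w bu bv bw j (Nat.even_iff.mp hj), mul_one]
    rw [Finset.sum_congr rfl h1,
      ← Finset.sum_filter_add_sum_filter_not (univ.filter (fun j : Fin M => Even j.val))
        (fun j => j = 0 ∨ j = v ∨ j = w) (fun j => z j), filter_filter, filter_filter]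
    congr 1
    · have hset : univ.filter (fun j : Fin M => Even j.val ∧ (j = 0 ∨ j = v ∨ j = w))
          = ({0, v, w} : Finset (Fin M)) := by
        ext i
        simp only [mem_filter, mem_univ, true_and, mem_insert, mem_singleton]
        constructor
        · rintro ⟨_, h⟩; exact h
        · rintro (rfl | rfl | rfl)
          · exact ⟨by rw [Fin.val_zero]; exact Even.zero, Or.inl rfl⟩
          · exact ⟨Nat.even_iff.mpr hve, Or.inr (Or.inl rfl)⟩
          · exact ⟨Nat.even_iff.mpr hwe, Or.inr (Or.inr rfl)⟩
      have h0v : (0 : Fin M) ≠ v := by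
        simp only [ne_eq, Fin.ext_iff, Fin.val_zero]; omega
      have h0w : (0 : Fin M) ≠ w := by
        simp only [ne_eq, Fin.ext_iff, Fin.val_zero]; omega
      have hvw' : v ≠ w := by simp only [ne_eq, Fin.ext_iff]; omega
      rw [hset, Finset.sum_insert (by simp [h0v, h0w]), Finset.sum_insert (by simp [hvw']),
        Finset.sum_singleton, add_assoc]
    · apply Finset.sum_congr _ (fun _ _ => rfl)
      ext i
      simp only [mem_filter, mem_univ, true_and, not_or, ne_eq]
  have hLset : univ.filter (fun j : Fin M => ¬Even j.val ∧ j.val < v.val)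
      = univ.filter (fun j : Fin M => 0 < j.val ∧ j.val < v.val ∧ Odd j.val) := by
    ext i
    simp only [mem_filter, mem_univ, true_and, Nat.even_iff, Nat.odd_iff]
    omega
  have hRset : univ.filter (fun j : Fin M => (¬Even j.val ∧ ¬j.val < v.val) ∧ j.val < w.val)
      = univ.filter (fun j : Fin M => v.val < j.val ∧ j.val < w.val ∧ Odd j.val) := by
    ext i
    simp only [mem_filter, mem_univ, true_and, Nat.even_iff, Nat.odd_iff]
    omega
  have hBset : univ.filter (fun j : Fin M => (¬Even j.val ∧ ¬j.val < v.val) ∧ ¬j.val < w.val)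
      = univ.filter (fun j : Fin M => w.val < j.val ∧ Odd j.val) := by
    ext i
    simp only [mem_filter, mem_univ, true_and, Nat.even_iff, Nat.odd_iff]
    omega
  have hB : ∑ j ∈ univ.filter (fun j : Fin M => ¬Even j.val), z j * cvec M v w bu bv bw j
      = bw * (∑ j ∈ univ.filter
            (fun j : Fin M => 0 < j.val ∧ j.val < v.val ∧ Odd j.val), z j)
        + (bu * (∑ j ∈ univ.filter
            (fun j : Fin M => v.val < j.val ∧ j.val < w.val ∧ Odd j.val), z j)
          + bv * (∑ j ∈ univ.filter
            (fun j : Fin M => w.val < j.val ∧ Odd j.val), z j)) := by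
    rw [← Finset.sum_filter_add_sum_filter_not
        (univ.filter (fun j : Fin M => ¬Even j.val)) (fun j => j.val < v.val) _,
      filter_filter, filter_filter,
      ← Finset.sum_filter_add_sum_filter_not
        (univ.filter (fun j : Fin M => ¬Even j.val ∧ ¬j.val < v.val)) (fun j => j.val < w.val) _,
      filter_filter, filter_filter, hLset, hRset, hBset]
    congr 1
    · rw [Finset.mul_sum]
      apply Finset.sum_congr rfl
      intro j hj
      simp only [mem_filter, mem_univ, true_and, Nat.odd_iff] at hj
      rw [cvec_eval_L M v w bu bv bw j hj.2.2 hj.2.1, mul_comm]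
    congr 1
    · rw [Finset.mul_sum]
      apply Finset.sum_congr rfl
      intro j hj
      simp only [mem_filter, mem_univ, true_and, Nat.odd_iff] at hj
      rw [cvec_eval_R M v w bu bv bw j hj.2.2 (by omega) hj.2.1, mul_comm]
    · rw [Finset.mul_sum]
      apply Finset.sum_congr rfl
      intro j hj
      simp only [mem_filter, mem_univ, true_and, Nat.odd_iff] at hj
      rw [cvec_eval_B M v w bu bv bw j hj.2 (by omega) hvw, mul_comm]
  rw [hA, hB]
  ring

end

/-- Let M ≥ 6 be even, u = 0 < v < w < M with v, w even, and
b_u ⊕ b_v ⊕ b_w = 0. Then for every z with Γ(z) ≠ 0 one has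
i^{b_u+b_v+b_w}·(−1)^{E(z)} = 1. -/
theorem ghz_type_identity_of_Gamma_ne_zero (M : ℕ) [NeZero M]
    (hM6 : 6 ≤ M) (hMeven : Even M) (v w : Fin M)
    (hv0 : 0 < v.val) (hvw : v.val < w.val)
    (hve : Even v.val) (hwe : Even w.val)
    (bu bv bw : ZMod 2) (hb : bu + bv + bw = 0)
    (z : Fin M → ZMod 2) (hz : cycleGamma M v w bu bv bw z ≠ 0) :
    Complex.I ^ (bu.val + bv.val + bw.val) *
      (-1 : ℂ) ^ (Eexp M v w bu bv bw z).val = 1 := by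
  classical
  set c := cvec M v w bu bv bw with hcdef
  have hrad := cvec_radical M hM6 hMeven v w hv0 hvw hve hwe bu bv bw hb
  have hq := cycleForm_add_of_radical M v w bu bv bw c hrad
  have hinner := inner_cvec M v w hv0 hvw hve hwe bu bv bw z
  have hshift : cycleGamma M v w bu bv bw z
      = ((-1:ℂ) ^ (∑ α : Fin M, z α * c α).val
          * Complex.I ^ (cycleForm M v w bu bv bw c).val)
        * cycleGamma M v w bu bv bw z := by
    conv_lhs => rw [cycleGamma]
    rw [← Equiv.sum_comp (Equiv.addRight c) (fun x => (-1:ℂ) ^ (∑ α : Fin M, z α * x α).val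
        * Complex.I ^ (cycleForm M v w bu bv bw x).val)]
    rw [cycleGamma, Finset.mul_sum]
    apply Finset.sum_congr rfl
    intro x _
    simp only [Equiv.coe_addRight]
    have hzx : (∑ α : Fin M, z α * (x + c) α)
        = (∑ α : Fin M, z α * x α) + (∑ α : Fin M, z α * c α) := by
      simp only [Pi.add_apply, mul_add]
      exact Finset.sum_add_distrib
    rw [hzx, hq x, neg_one_pow_val_add, I_pow_val_add]
    ring
  have hK : (-1:ℂ) ^ (∑ α : Fin M, z α * c α).val
      * Complex.I ^ (cycleForm M v w bu bv bw c).val = 1 := by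
    have h1 : ((-1:ℂ) ^ (∑ α : Fin M, z α * c α).val
        * Complex.I ^ (cycleForm M v w bu bv bw c).val) * cycleGamma M v w bu bv bw z
        = 1 * cycleGamma M v w bu bv bw z := by
      rw [one_mul, ← hshift]
    exact mul_right_cancel₀ hz h1
  have hqc := cycleForm_cvec M hM6 hMeven v w hvw hve hwe bu bv bw
  have hval : (cycleForm M v w bu bv bw c).val = bu.val + bv.val + bw.val := by
    rw [hcdef, hqc]
    have h1 : io2 bu + io2 bv + io2 bw = ((bu.val + bv.val + bw.val : ℕ) : ZMod 4) := by
      simp only [io2]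
      push_cast
      ring
    rw [h1, ZMod.val_natCast, Nat.mod_eq_of_lt]
    have h2 := ZMod.val_lt bu
    have h3 := ZMod.val_lt bv
    have h4 := ZMod.val_lt bw
    omega
  rw [← hinner, ← hval, mul_comm]
  exact hK
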